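/- Let H₁ and H₂ be finite-dimensional complex Hilbert spaces, let {Pᵢ} be a finite family of mutually orthogonal projections on H₁ with Σᵢ Pᵢ = 1, and let {Qⱼ} be a finite family of mutually orthogonal projections on H₂ with Σⱼ Qⱼ = 1. For a density operator σ on H₁ ⊗ H₂ set p_{ij} := Tr((Pᵢ ⊗ Qⱼ) σ (Pᵢ ⊗ Qⱼ)) and, whenever p_{ij} > 0, σ_{ij} := (Pᵢ ⊗ Qⱼ) σ (Pᵢ ⊗ Qⱼ)/p_{ij}. Then Σ_{(i,j) : p_{ij} > 0} p_{ij} (‖σ_{ij}‖_γ − 1) ≤ ‖σ‖_γ − 1. -/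

import Mathlib

open Matrix
open scoped Kronecker ComplexOrder

noncomputable def traceNorm {n : Type*} [Fintype n] [DecidableEq n] (A : Matrix n n ℂ) : ℝ :=
  ((Matrix.posSemidef_conjTranspose_mul_self A).1.eigenvectorUnitary.1 *
    diagonal (((↑) : ℝ → ℂ) ∘ (Real.sqrt ∘ (Matrix.posSemidef_conjTranspose_mul_self A).1.eigenvalues)) *
    (star (Matrix.posSemidef_conjTranspose_mul_self A).1.eigenvectorUnitary : Matrix n n ℂ)).trace.re

noncomputable def gammaNorm {m n : Type*} [Fintype m] [DecidableEq m] [Fintype n] [DecidableEq n]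
    (t : Matrix (m × n) (m × n) ℂ) : ℝ :=
  sInf { c : ℝ | ∃ (r : ℕ) (u : Fin r → Matrix m m ℂ) (v : Fin r → Matrix n n ℂ),
    t = ∑ i, (u i) ⊗ₖ (v i) ∧ c = ∑ i, traceNorm (u i) * traceNorm (v i) }

def IsDensity {n : Type*} [Fintype n] (ρ : Matrix n n ℂ) : Prop :=
  ρ.PosSemidef ∧ ρ.trace = 1

def evec {ι : Type*} (ψ : EuclideanSpace ℂ ι) : ι → ℂ := ψ

noncomputable def tensorVec {ι κ : Type*} (a : EuclideanSpace ℂ ι) (b : EuclideanSpace ℂ κ) :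
    EuclideanSpace ℂ (ι × κ) :=
  (WithLp.equiv 2 _).symm (fun p => evec a p.1 * evec b p.2)

noncomputable def projOnto {ι : Type*} (ψ : EuclideanSpace ℂ ι) : Matrix ι ι ℂ :=
  Matrix.vecMulVec (evec ψ) (star (evec ψ))

set_option linter.unusedSectionVars false

namespace Lueders

variable {n : Type*} [Fintype n] [DecidableEq n]

/-! ### vecMulVec toolbox -/

lemma mul_vecMulVec (A : Matrix n n ℂ) (u v : n → ℂ) :
    A * Matrix.vecMulVec u v = Matrix.vecMulVec (A *ᵥ u) v := by
  ext i j
  simp only [Matrix.mul_apply, Matrix.vecMulVec_apply, Matrix.mulVec, dotProduct,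
    Finset.sum_mul]
  exact Finset.sum_congr rfl fun x _ => by ring

lemma vecMulVec_mul (u v : n → ℂ) (M : Matrix n n ℂ) :
    Matrix.vecMulVec u v * M = Matrix.vecMulVec u (v ᵥ* M) := by
  ext i j
  simp only [Matrix.mul_apply, Matrix.vecMulVec_apply, Matrix.vecMul, dotProduct,
    Finset.mul_sum]
  exact Finset.sum_congr rfl fun x _ => by ring

lemma trace_mul_vecMulVec (X : Matrix n n ℂ) (u v : n → ℂ) :
    (X * Matrix.vecMulVec u v).trace = v ⬝ᵥ (X *ᵥ u) := by
  rw [mul_vecMulVec]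
  simp only [Matrix.trace, Matrix.diag, Matrix.vecMulVec_apply, dotProduct]
  exact Finset.sum_congr rfl fun x _ => by ring

lemma vecMulVec_mul_vecMulVec (a b c d : n → ℂ) :
    Matrix.vecMulVec a b * Matrix.vecMulVec c d = (b ⬝ᵥ c) • Matrix.vecMulVec a d := by
  ext i j
  simp only [Matrix.mul_apply, Matrix.vecMulVec_apply, Matrix.smul_apply, dotProduct,
    Finset.sum_mul, smul_eq_mul, Finset.mul_sum]
  exact Finset.sum_congr rfl fun x _ => by ring

lemma vecMulVec_conjTranspose (u v : n → ℂ) :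
    (Matrix.vecMulVec u v)ᴴ = Matrix.vecMulVec (star v) (star u) := by
  ext i j
  simp [Matrix.vecMulVec_apply, Matrix.conjTranspose_apply, mul_comm]

/-! ### SVD data -/

noncomputable def sd (A : Matrix n n ℂ) : n → ℝ :=
  (Matrix.posSemidef_conjTranspose_mul_self A).1.eigenvalues

noncomputable def sy (A : Matrix n n ℂ) (k : n) : n → ℂ :=
  ⇑((Matrix.posSemidef_conjTranspose_mul_self A).1.eigenvectorBasis k)

lemma sd_nonneg (A : Matrix n n ℂ) (k : n) : 0 ≤ sd A k :=
  (Matrix.posSemidef_conjTranspose_mul_self A).eigenvalues_nonneg k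

lemma H_mulVec (A : Matrix n n ℂ) (k : n) :
    (Aᴴ * A) *ᵥ sy A k = (sd A k : ℂ) • sy A k := by
  have := (Matrix.posSemidef_conjTranspose_mul_self A).1.mulVec_eigenvectorBasis k
  rw [sy, sd, this]
  ext i
  simp [RCLike.real_smul_eq_coe_smul (K := ℂ)]

lemma sy_ortho (A : Matrix n n ℂ) (k l : n) :
    star (sy A k) ⬝ᵥ sy A l = if k = l then 1 else 0 := by
  have h := (Matrix.posSemidef_conjTranspose_mul_self A).1.eigenvectorBasis.orthonormal
  rw [orthonormal_iff_ite] at h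
  have := h k l
  rw [EuclideanSpace.inner_eq_star_dotProduct, dotProduct_comm] at this; exact this

lemma traceNorm_eq_sum_sqrt (A : Matrix n n ℂ) :
    traceNorm A = ∑ k, Real.sqrt (sd A k) := by
  have hH := Matrix.posSemidef_conjTranspose_mul_self A
  rw [traceNorm]
  rw [Matrix.trace_mul_cycle]
  rw [(Matrix.mem_unitaryGroup_iff'.mp hH.1.eigenvectorUnitary.2), one_mul]
  simp [Matrix.trace_diagonal, sd]

lemma traceNorm_nonneg (A : Matrix n n ℂ) : 0 ≤ traceNorm A := by
  rw [traceNorm_eq_sum_sqrt]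
  exact Finset.sum_nonneg fun k _ => Real.sqrt_nonneg _

lemma sum_sy_outer (A : Matrix n n ℂ) :
    ∑ k, Matrix.vecMulVec (sy A k) (star (sy A k)) = 1 := by
  have hH := Matrix.posSemidef_conjTranspose_mul_self A
  have hV : (hH.1.eigenvectorUnitary : Matrix n n ℂ) *
      star (hH.1.eigenvectorUnitary : Matrix n n ℂ) = 1 :=
    Matrix.mem_unitaryGroup_iff.mp hH.1.eigenvectorUnitary.2
  ext i j
  calc (∑ k, Matrix.vecMulVec (sy A k) (star (sy A k))) i j
      = ∑ k, (hH.1.eigenvectorUnitary : Matrix n n ℂ) i k *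
          star ((hH.1.eigenvectorUnitary : Matrix n n ℂ) j k) := by
        rw [Matrix.sum_apply]
        exact Finset.sum_congr rfl fun k _ => by
          simp [Matrix.vecMulVec_apply, sy, Matrix.IsHermitian.eigenvectorUnitary_apply]
    _ = ((hH.1.eigenvectorUnitary : Matrix n n ℂ) *
          star (hH.1.eigenvectorUnitary : Matrix n n ℂ)) i j := by
        simp [Matrix.mul_apply, Matrix.star_apply]
    _ = (1 : Matrix n n ℂ) i j := by rw [hV]

lemma decomp (A : Matrix n n ℂ) :
    A = ∑ k, Matrix.vecMulVec (A *ᵥ sy A k) (star (sy A k)) := by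
  conv_lhs => rw [← mul_one A, ← sum_sy_outer A]
  rw [Finset.mul_sum]
  exact Finset.sum_congr rfl fun k _ => mul_vecMulVec _ _ _

/-- `‖A yₖ‖² = dₖ` -/
lemma dot_A_sy (A : Matrix n n ℂ) (k l : n) :
    star (A *ᵥ sy A k) ⬝ᵥ (A *ᵥ sy A l) = if k = l then (sd A k : ℂ) else 0 := by
  have : star (A *ᵥ sy A k) ⬝ᵥ (A *ᵥ sy A l) = star (sy A k) ⬝ᵥ ((Aᴴ * A) *ᵥ sy A l) := by
    rw [← Matrix.mulVec_mulVec, Matrix.dotProduct_mulVec _ Aᴴ, Matrix.star_mulVec]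
  rw [this, H_mulVec, dotProduct_smul, sy_ortho]
  by_cases h : k = l <;> simp [h, smul_eq_mul]

/-! ### norm/dot lemmas -/

lemma norm_equiv_symm (x : n → ℂ) :
    ‖(WithLp.equiv 2 (n → ℂ)).symm x‖ = Real.sqrt (star x ⬝ᵥ x).re := by
  rw [norm_eq_sqrt_re_inner (𝕜 := ℂ), show (inner ℂ ((WithLp.equiv 2 (n → ℂ)).symm x)
    ((WithLp.equiv 2 (n → ℂ)).symm x)) = star x ⬝ᵥ x from dotProduct_comm _ _]; rfl

lemma cs_dot (x y : n → ℂ) :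
    ‖star x ⬝ᵥ y‖ ≤ Real.sqrt (star x ⬝ᵥ x).re * Real.sqrt (star y ⬝ᵥ y).re := by
  have h := norm_inner_le_norm (𝕜 := ℂ) ((WithLp.equiv 2 (n → ℂ)).symm x)
    ((WithLp.equiv 2 (n → ℂ)).symm y)
  rwa [show inner ℂ ((WithLp.equiv 2 (n → ℂ)).symm x) ((WithLp.equiv 2 (n → ℂ)).symm y)
    = star x ⬝ᵥ y from dotProduct_comm _ _, norm_equiv_symm, norm_equiv_symm] at h

/-! ### Hölder-type bound -/

lemma re_trace_mul_le (X A : Matrix n n ℂ) (hX : ((1 : Matrix n n ℂ) - Xᴴ * X).PosSemidef) :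
    ((X * A).trace).re ≤ traceNorm A := by
  have key : ∀ k, ‖star (sy A k) ⬝ᵥ (X *ᵥ (A *ᵥ sy A k))‖ ≤ Real.sqrt (sd A k) := by
    intro k
    have h1 : (star (sy A k) ⬝ᵥ sy A k).re = 1 := by rw [sy_ortho]; simp
    -- bound on ‖X w‖² where w = A yₖ
    set w := A *ᵥ sy A k with hw
    have h2 : star (X *ᵥ w) ⬝ᵥ (X *ᵥ w) = star w ⬝ᵥ ((Xᴴ * X) *ᵥ w) := by
      rw [← Matrix.mulVec_mulVec, Matrix.dotProduct_mulVec _ Xᴴ, Matrix.star_mulVec]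
    have h3 : 0 ≤ (star w ⬝ᵥ (((1 : Matrix n n ℂ) - Xᴴ * X) *ᵥ w)).re :=
      hX.re_dotProduct_nonneg w
    have h4 : (star w ⬝ᵥ w) = (sd A k : ℂ) := by rw [hw, dot_A_sy]; simp
    have h5 : (star (X *ᵥ w) ⬝ᵥ (X *ᵥ w)).re ≤ sd A k := by
      rw [Matrix.sub_mulVec, dotProduct_sub, Complex.sub_re, Matrix.one_mulVec, h4] at h3
      rw [h2]
      simpa using h3
    calc ‖star (sy A k) ⬝ᵥ (X *ᵥ w)‖
        ≤ Real.sqrt (star (sy A k) ⬝ᵥ sy A k).re * Real.sqrt (star (X *ᵥ w) ⬝ᵥ (X *ᵥ w)).re :=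
          cs_dot _ _
      _ ≤ 1 * Real.sqrt (sd A k) := by
          apply mul_le_mul
          · rw [h1]; simp
          · exact Real.sqrt_le_sqrt h5
          · exact Real.sqrt_nonneg _
          · norm_num
      _ = Real.sqrt (sd A k) := one_mul _
  have htr : (X * A).trace = ∑ k, star (sy A k) ⬝ᵥ (X *ᵥ (A *ᵥ sy A k)) := by
    conv_lhs => rw [decomp A, Finset.mul_sum, Matrix.trace_sum]
    exact Finset.sum_congr rfl fun k _ => trace_mul_vecMulVec _ _ _
  rw [htr, Complex.re_sum, traceNorm_eq_sum_sqrt]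
  refine Finset.sum_le_sum fun k _ => ?_
  exact le_trans (Complex.re_le_norm _) (key k)


/-! ### dual optimum for a block -/

lemma exists_dual_block (P B : Matrix n n ℂ) (hP : Pᴴ = P) (hPi : P * P = P)
    (hB : P * B * P = B) :
    ∃ X : Matrix n n ℂ, P * X * P = X ∧ (P - Xᴴ * X).PosSemidef ∧
      (X * B).trace = (traceNorm B : ℂ) := by
  classical
  set S : Finset n := Finset.univ.filter (fun k => sd B k ≠ 0) with hS
  set x : n → n → ℂ := fun k => ((Real.sqrt (sd B k) : ℂ))⁻¹ • (B *ᵥ sy B k) with hx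
  set X : Matrix n n ℂ := ∑ k ∈ S, Matrix.vecMulVec (sy B k) (star (x k)) with hX
  have hPB : P * B = B := by
    conv_lhs => rw [← hB]
    rw [← Matrix.mul_assoc, ← Matrix.mul_assoc, hPi]
    exact hB
  have hBP : B * P = B := by
    conv_lhs => rw [← hB]
    rw [Matrix.mul_assoc, Matrix.mul_assoc, hPi, ← Matrix.mul_assoc]
    exact hB
  have hstarx : ∀ k, star (x k) = ((Real.sqrt (sd B k) : ℂ))⁻¹ • star (B *ᵥ sy B k) := by
    intro k
    rw [hx]
    simp only [star_smul, star_inv₀, RCLike.star_def, Complex.conj_ofReal]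
  -- x is orthonormal on S
  have hxort : ∀ k, sd B k ≠ 0 → ∀ l, star (x k) ⬝ᵥ x l = if k = l then 1 else 0 := by
    intro k hk' l
    rw [hstarx, hx]
    simp only [smul_dotProduct, dotProduct_smul]
    rw [dot_A_sy]
    by_cases h : k = l
    · subst h
      have hd : 0 < sd B k := lt_of_le_of_ne (sd_nonneg B k) (Ne.symm hk')
      have hsq : Real.sqrt (sd B k) ≠ 0 := Real.sqrt_ne_zero'.mpr hd
      simp only [if_pos rfl, smul_eq_mul, ← mul_assoc]
      rw [← Complex.ofReal_inv, ← Complex.ofReal_mul]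
      rw [show (Real.sqrt (sd B k))⁻¹ * (Real.sqrt (sd B k))⁻¹
            = ((Real.sqrt (sd B k)) * (Real.sqrt (sd B k)))⁻¹ by rw [mul_inv]]
      rw [Real.mul_self_sqrt (sd_nonneg B k)]
      rw [if_pos trivial, if_pos trivial]
      norm_cast
      exact inv_mul_cancel₀ hk'
    · simp [h]
  -- P fixes the vectors
  have hPx : ∀ k, P *ᵥ x k = x k := by
    intro k
    rw [hx]
    simp only [Matrix.mulVec_smul]
    rw [Matrix.mulVec_mulVec, hPB]
  have hPy : ∀ k, sd B k ≠ 0 → P *ᵥ sy B k = sy B k := by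
    intro k hk
    have hPH : P * (Bᴴ * B) = Bᴴ * B := by
      rw [← Matrix.mul_assoc]
      congr 1
      calc P * Bᴴ = (B * Pᴴ)ᴴ := by rw [Matrix.conjTranspose_mul, Matrix.conjTranspose_conjTranspose]
        _ = Bᴴ := by rw [hP, hBP]
    have h1 : sy B k = ((sd B k : ℂ))⁻¹ • ((Bᴴ * B) *ᵥ sy B k) := by
      rw [H_mulVec]
      rw [smul_smul, inv_mul_cancel₀ (by exact_mod_cast hk), one_smul]
    conv_lhs => rw [h1]
    rw [Matrix.mulVec_smul, Matrix.mulVec_mulVec, hPH, ← h1]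
  -- P X P = X
  have hXfix : P * X * P = X := by
    rw [hX, Finset.mul_sum, Finset.sum_mul]
    refine Finset.sum_congr rfl fun k hk => ?_
    rw [hS, Finset.mem_filter] at hk
    rw [mul_vecMulVec, vecMulVec_mul, hPy k hk.2]
    congr 1
    rw [show star (x k) ᵥ* P = star (x k) ᵥ* Pᴴ by rw [hP]]
    rw [← Matrix.star_mulVec, hPx]
  -- Xᴴ X = ∑ₖ xₖ xₖ*
  have hXd : Xᴴ = ∑ k ∈ S, Matrix.vecMulVec (x k) (star (sy B k)) := by
    rw [hX, Matrix.conjTranspose_sum]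
    refine Finset.sum_congr rfl fun k _ => ?_
    rw [vecMulVec_conjTranspose, star_star]
  set R : Matrix n n ℂ := ∑ k ∈ S, Matrix.vecMulVec (x k) (star (x k)) with hR
  have hXX : Xᴴ * X = R := by
    rw [hXd, hX, Finset.sum_mul_sum, hR]
    refine Finset.sum_congr rfl fun k hk => ?_
    rw [hS, Finset.mem_filter] at hk
    calc ∑ l ∈ S, Matrix.vecMulVec (x k) (star (sy B k)) * Matrix.vecMulVec (sy B l) (star (x l))
        = ∑ l ∈ S, if k = l then Matrix.vecMulVec (x k) (star (x l)) else 0 := by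
          refine Finset.sum_congr rfl fun l _ => ?_
          rw [vecMulVec_mul_vecMulVec, sy_ortho, ite_smul, one_smul, zero_smul]
      _ = Matrix.vecMulVec (x k) (star (x k)) := by
          rw [Finset.sum_ite_eq]
          rw [if_pos (by rw [hS, Finset.mem_filter]; exact ⟨Finset.mem_univ _, hk.2⟩)]
  have hRstar : Rᴴ = R := by
    rw [hR, Matrix.conjTranspose_sum]
    exact Finset.sum_congr rfl fun k _ => by rw [vecMulVec_conjTranspose, star_star]
  have hPR : P * R = R := by
    rw [hR, Finset.mul_sum]
    exact Finset.sum_congr rfl fun k _ => by rw [mul_vecMulVec, hPx]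
  have hRP : R * P = R := by
    rw [hR, Finset.sum_mul]
    refine Finset.sum_congr rfl fun k _ => ?_
    rw [vecMulVec_mul]
    congr 1
    rw [show star (x k) ᵥ* P = star (x k) ᵥ* Pᴴ by rw [hP]]
    rw [← Matrix.star_mulVec, hPx]
  have hRR : R * R = R := by
    conv_lhs => rw [hR, Finset.sum_mul]
    rw [hR]
    refine Finset.sum_congr rfl fun k hk => ?_
    rw [hS, Finset.mem_filter] at hk
    rw [Finset.mul_sum]
    calc ∑ l ∈ S, Matrix.vecMulVec (x k) (star (x k)) * Matrix.vecMulVec (x l) (star (x l))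
        = ∑ l ∈ S, if k = l then Matrix.vecMulVec (x k) (star (x l)) else 0 := by
          refine Finset.sum_congr rfl fun l _ => ?_
          rw [vecMulVec_mul_vecMulVec]
          rw [show star (x k) ⬝ᵥ x l = if k = l then 1 else 0 from hxort k hk.2 l]
          rw [ite_smul, one_smul, zero_smul]
      _ = Matrix.vecMulVec (x k) (star (x k)) := by
          rw [Finset.sum_ite_eq]
          rw [if_pos (by rw [hS, Finset.mem_filter]; exact ⟨Finset.mem_univ _, hk.2⟩)]
  have hPRpsd : (P - Xᴴ * X).PosSemidef := by
    rw [hXX]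
    have hfix : (P - R)ᴴ * (P - R) = P - R := by
      rw [Matrix.conjTranspose_sub, hP, hRstar]
      rw [Matrix.sub_mul, Matrix.mul_sub, Matrix.mul_sub, hPi, hPR, hRP, hRR]
      abel
    rw [← hfix]
    exact Matrix.posSemidef_conjTranspose_mul_self _
  refine ⟨X, hXfix, hPRpsd, ?_⟩
  rw [hX, Finset.sum_mul, Matrix.trace_sum]
  have hterm : ∀ k, sd B k ≠ 0 →
      (Matrix.vecMulVec (sy B k) (star (x k)) * B).trace = (Real.sqrt (sd B k) : ℂ) := by
    intro k hk
    rw [Matrix.trace_mul_comm, trace_mul_vecMulVec, hstarx]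
    rw [smul_dotProduct]
    rw [show star (B *ᵥ sy B k) ⬝ᵥ (B *ᵥ sy B k) = (sd B k : ℂ) by rw [dot_A_sy]; simp]
    rw [smul_eq_mul, ← Complex.ofReal_inv, ← Complex.ofReal_mul]
    congr 1
    rw [inv_mul_eq_div, div_eq_iff (Real.sqrt_ne_zero'.mpr
      (lt_of_le_of_ne (sd_nonneg B k) (Ne.symm hk)))]
    rw [Real.mul_self_sqrt (sd_nonneg B k)]
  calc ∑ k ∈ S, (Matrix.vecMulVec (sy B k) (star (x k)) * B).trace
      = ∑ k ∈ S, ((Real.sqrt (sd B k) : ℂ)) := by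
        refine Finset.sum_congr rfl fun k hk => ?_
        rw [hS, Finset.mem_filter] at hk
        exact hterm k hk.2
    _ = ∑ k, ((Real.sqrt (sd B k) : ℂ)) := by
        rw [hS]
        refine Finset.sum_filter_of_ne fun k _ hne => ?_
        intro h0
        exact hne (by rw [h0, Real.sqrt_zero, Complex.ofReal_zero])
    _ = (traceNorm B : ℂ) := by
        rw [traceNorm_eq_sum_sqrt]
        push_cast
        rfl

/-! ### pinching inequality -/

lemma posSemidef_sum {α : Type*} (s : Finset α) (f : α → Matrix n n ℂ)
    (h : ∀ i ∈ s, (f i).PosSemidef) : (∑ i ∈ s, f i).PosSemidef := by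
  classical
  induction s using Finset.induction_on with
  | empty =>
      simp only [Finset.sum_empty]
      constructor
      · simp [Matrix.IsHermitian]
      · intro x; simp
  | @insert a s' hx ih =>
      rw [Finset.sum_insert hx]
      exact (h a (Finset.mem_insert_self a s')).add
        (ih fun i hi => h i (Finset.mem_insert_of_mem hi))

lemma pinching {α : Type*} [Fintype α] (P : α → Matrix n n ℂ)
    (hPherm : ∀ i, (P i)ᴴ = P i) (hPidem : ∀ i, P i * P i = P i)
    (hPorth : ∀ i j, i ≠ j → P i * P j = 0) (hPsum : ∑ i, P i = 1)
    (A : Matrix n n ℂ) :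
    ∑ i, traceNorm (P i * A * P i) ≤ traceNorm A := by
  classical
  have hBfix : ∀ i, P i * (P i * A * P i) * P i = P i * A * P i := by
    intro i
    simp only [← Matrix.mul_assoc]
    rw [hPidem, Matrix.mul_assoc (P i * A) (P i) (P i), hPidem]
  choose X hfix hpsd htr using fun i =>
    exists_dual_block (P i) (P i * A * P i) (hPherm i) (hPidem i) (hBfix i)
  have hcross : ∀ i j, i ≠ j → (X i)ᴴ * X j = 0 := by
    intro i j hij
    conv_lhs => rw [← hfix i, ← hfix j]
    rw [Matrix.conjTranspose_mul, Matrix.conjTranspose_mul, hPherm]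
    have h0 : P i * (P j * X j * P j) = 0 := by
      rw [← Matrix.mul_assoc (P i) (P j * X j) (P j), ← Matrix.mul_assoc (P i) (P j) (X j),
        hPorth i j hij, Matrix.zero_mul, Matrix.zero_mul]
    rw [Matrix.mul_assoc (P i) ((X i)ᴴ * P i) (P j * X j * P j),
      Matrix.mul_assoc ((X i)ᴴ) (P i) (P j * X j * P j), h0, Matrix.mul_zero, Matrix.mul_zero]
  have hXsum : (∑ i, X i)ᴴ * (∑ i, X i) = ∑ i, (X i)ᴴ * X i := by
    rw [Matrix.conjTranspose_sum, Finset.sum_mul_sum]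
    refine Finset.sum_congr rfl fun i _ => ?_
    exact Finset.sum_eq_single i (fun j _ hji => hcross i j (Ne.symm hji))
      (fun h => absurd (Finset.mem_univ i) h)
  have hcontr : ((1 : Matrix n n ℂ) - (∑ i, X i)ᴴ * (∑ i, X i)).PosSemidef := by
    rw [hXsum, ← hPsum, ← Finset.sum_sub_distrib]
    exact posSemidef_sum _ _ fun i _ => hpsd i
  have htrace : ((∑ i, X i) * A).trace = ∑ i, (traceNorm (P i * A * P i) : ℂ) := by
    rw [Finset.sum_mul, Matrix.trace_sum]
    refine Finset.sum_congr rfl fun i _ => ?_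
    rw [← htr i]
    conv_lhs => rw [← hfix i]
    rw [Matrix.mul_assoc (P i) (X i) (P i), Matrix.mul_assoc (P i) (X i * P i) A,
      Matrix.trace_mul_comm (P i) (X i * P i * A)]
    simp only [Matrix.mul_assoc]
  have hre := re_trace_mul_le (∑ i, X i) A hcontr
  rw [htrace] at hre
  calc ∑ i, traceNorm (P i * A * P i)
      = (∑ i, (traceNorm (P i * A * P i) : ℂ)).re := by
        rw [Complex.re_sum]
        exact Finset.sum_congr rfl fun i _ => by simp
    _ ≤ traceNorm A := hre

/-! ### traceNorm smul -/

lemma traceNorm_smul (A : Matrix n n ℂ) {c : ℝ} (hc : 0 ≤ c) :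
    traceNorm ((c : ℂ) • A) = c * traceNorm A := by
  obtain ⟨X, -, hX, htr⟩ := exists_dual_block 1 A (by simp) (by simp) (by simp)
  obtain ⟨Y, -, hY, htrY⟩ := exists_dual_block 1 ((c : ℂ) • A) (by simp) (by simp) (by simp)
  apply le_antisymm
  · have h1 := re_trace_mul_le Y A hY
    have h2 : (Y * ((c : ℂ) • A)).trace = (c : ℂ) * (Y * A).trace := by
      rw [Matrix.mul_smul, Matrix.trace_smul, smul_eq_mul]
    rw [htrY] at h2
    have h3 : traceNorm ((c : ℂ) • A) = c * (Y * A).trace.re := by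
      have := congrArg Complex.re h2
      simpa using this
    rw [h3]
    exact mul_le_mul_of_nonneg_left h1 hc
  · have h1 := re_trace_mul_le X ((c : ℂ) • A) hX
    rw [Matrix.mul_smul, Matrix.trace_smul, smul_eq_mul, htr] at h1
    simpa using h1

/-! ### gammaNorm -/

section gamma

variable {p q : Type*} [Fintype p] [DecidableEq p] [Fintype q] [DecidableEq q]

lemma gamma_mem_nonneg (t : Matrix (p × q) (p × q) ℂ) {c : ℝ}
    (hc : c ∈ { c : ℝ | ∃ (r : ℕ) (u : Fin r → Matrix p p ℂ) (v : Fin r → Matrix q q ℂ),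
      t = ∑ i, (u i) ⊗ₖ (v i) ∧ c = ∑ i, traceNorm (u i) * traceNorm (v i) }) : 0 ≤ c := by
  obtain ⟨r, u, v, -, rfl⟩ := hc
  exact Finset.sum_nonneg fun i _ => mul_nonneg (traceNorm_nonneg _) (traceNorm_nonneg _)

lemma gamma_bddBelow (t : Matrix (p × q) (p × q) ℂ) :
    BddBelow { c : ℝ | ∃ (r : ℕ) (u : Fin r → Matrix p p ℂ) (v : Fin r → Matrix q q ℂ),
      t = ∑ i, (u i) ⊗ₖ (v i) ∧ c = ∑ i, traceNorm (u i) * traceNorm (v i) } :=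
  ⟨0, fun _ hc => gamma_mem_nonneg t hc⟩

lemma gamma_set_nonempty (t : Matrix (p × q) (p × q) ℂ) :
    Set.Nonempty { c : ℝ | ∃ (r : ℕ) (u : Fin r → Matrix p p ℂ) (v : Fin r → Matrix q q ℂ),
      t = ∑ i, (u i) ⊗ₖ (v i) ∧ c = ∑ i, traceNorm (u i) * traceNorm (v i) } := by
  classical
  set e : Fin (Fintype.card (p × p)) ≃ p × p := (Fintype.equivFin (p × p)).symm with he
  refine ⟨_, Fintype.card (p × p),
    fun i => Matrix.single (e i).1 (e i).2 1,
    fun i => Matrix.of (fun x y => t ((e i).1, x) ((e i).2, y)), ?_, rfl⟩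
  ext ⟨a, x⟩ ⟨b, y⟩
  rw [Matrix.sum_apply]
  rw [Equiv.sum_comp e (fun ab : p × p =>
    (Matrix.single ab.1 ab.2 (1:ℂ) ⊗ₖ Matrix.of (fun x y => t (ab.1, x) (ab.2, y)))
      (a, x) (b, y))]
  rw [Fintype.sum_prod_type]
  simp only [Matrix.kroneckerMap_apply, Matrix.of_apply, Matrix.single,
    Matrix.of_apply, Pi.single_apply]
  rw [Finset.sum_eq_single a]
  · rw [Finset.sum_eq_single b]
    · simp
    · intro c _ hc
      simp [hc]
    · intro h
      exact absurd (Finset.mem_univ b) h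
  · intro c _ hc
    simp [hc]
  · intro h
    exact absurd (Finset.mem_univ a) h

lemma gammaNorm_le (t : Matrix (p × q) (p × q) ℂ) {c : ℝ}
    (hc : c ∈ { c : ℝ | ∃ (r : ℕ) (u : Fin r → Matrix p p ℂ) (v : Fin r → Matrix q q ℂ),
      t = ∑ i, (u i) ⊗ₖ (v i) ∧ c = ∑ i, traceNorm (u i) * traceNorm (v i) }) :
    gammaNorm t ≤ c :=
  csInf_le (gamma_bddBelow t) hc

lemma le_gammaNorm (t : Matrix (p × q) (p × q) ℂ) {b : ℝ}
    (h : ∀ c ∈ { c : ℝ | ∃ (r : ℕ) (u : Fin r → Matrix p p ℂ) (v : Fin r → Matrix q q ℂ),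
      t = ∑ i, (u i) ⊗ₖ (v i) ∧ c = ∑ i, traceNorm (u i) * traceNorm (v i) }, b ≤ c) :
    b ≤ gammaNorm t :=
  le_csInf (gamma_set_nonempty t) h

lemma gammaNorm_smul_le (t : Matrix (p × q) (p × q) ℂ) {c : ℝ} (hc : 0 ≤ c) :
    gammaNorm ((c : ℂ) • t) ≤ c * gammaNorm t := by
  rcases eq_or_lt_of_le hc with h0 | hpos
  · rw [← h0]
    push_cast
    rw [zero_smul, zero_mul]
    refine gammaNorm_le _ ⟨0, fun _ => 0, fun _ => 0, by simp, by simp⟩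
  · rw [mul_comm, ← div_le_iff₀ hpos]
    refine le_gammaNorm t fun d hd => ?_
    rw [div_le_iff₀ hpos]
    obtain ⟨r, u, v, hdec, rfl⟩ := hd
    refine gammaNorm_le _ ⟨r, fun i => (c : ℂ) • u i, v, ?_, ?_⟩
    · rw [hdec, Finset.smul_sum]
      exact Finset.sum_congr rfl fun i _ => (Matrix.smul_kronecker _ _ _).symm
    · rw [Finset.sum_mul]
      refine Finset.sum_congr rfl fun i _ => ?_
      rw [traceNorm_smul _ hc]
      ring

lemma kron_conjTranspose (A : Matrix p p ℂ) (B : Matrix q q ℂ) :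
    (A ⊗ₖ B)ᴴ = Aᴴ ⊗ₖ Bᴴ := by
  ext ⟨i, x⟩ ⟨j, y⟩
  simp only [Matrix.conjTranspose_apply, Matrix.kroneckerMap_apply, star_mul']

lemma kron_sum_right {κ : Type*} [Fintype κ] (A : Matrix p p ℂ) (B : κ → Matrix q q ℂ) :
    A ⊗ₖ (∑ j, B j) = ∑ j, A ⊗ₖ B j := by
  ext ⟨i, x⟩ ⟨j, y⟩
  simp only [Matrix.kroneckerMap_apply, Matrix.sum_apply, Finset.mul_sum]

lemma kron_sum_left {κ : Type*} [Fintype κ] (A : κ → Matrix p p ℂ) (B : Matrix q q ℂ) :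
    (∑ i, A i) ⊗ₖ B = ∑ i, A i ⊗ₖ B := by
  ext ⟨i, x⟩ ⟨j, y⟩
  simp only [Matrix.kroneckerMap_apply, Matrix.sum_apply, Finset.sum_mul]

end gamma

lemma trace_re_nonneg {M : Matrix n n ℂ} (hM : M.PosSemidef) : 0 ≤ M.trace.re := by
  rw [Matrix.trace, Complex.re_sum]
  refine Finset.sum_nonneg fun i _ => ?_
  have := hM.re_dotProduct_nonneg (Pi.single i 1)
  simpa [dotProduct, Matrix.mulVec, Pi.single_apply, Finset.sum_ite_eq,
    Matrix.diag] using this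

end Lueders

open Lueders

/-- For local Lüders–von Neumann measurements given by complete families of mutually
orthogonal projections {Pᵢ}, {Qⱼ}, the average entanglement `‖·‖_γ - 1` of the
(normalized) outcome states does not exceed that of the input state. -/
theorem lueders_average_gammaNorm_le {m n ι κ : Type*}
    [Fintype m] [DecidableEq m] [Fintype n] [DecidableEq n] [Fintype ι] [Fintype κ]
    (P : ι → Matrix m m ℂ) (Q : κ → Matrix n n ℂ)
    (hPherm : ∀ i, (P i)ᴴ = P i) (hPidem : ∀ i, P i * P i = P i)
    (hPorth : ∀ i j, i ≠ j → P i * P j = 0) (hPsum : ∑ i, P i = 1)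
    (hQherm : ∀ j, (Q j)ᴴ = Q j) (hQidem : ∀ j, Q j * Q j = Q j)
    (hQorth : ∀ i j, i ≠ j → Q i * Q j = 0) (hQsum : ∑ j, Q j = 1)
    (σ : Matrix (m × n) (m × n) ℂ) (hσ : IsDensity σ) :
    ∑ ij ∈ Finset.univ.filter
        (fun ij : ι × κ =>
          0 < (((P ij.1 ⊗ₖ Q ij.2) * σ * (P ij.1 ⊗ₖ Q ij.2)).trace.re)),
      (((P ij.1 ⊗ₖ Q ij.2) * σ * (P ij.1 ⊗ₖ Q ij.2)).trace.re) *
        (gammaNorm (((((P ij.1 ⊗ₖ Q ij.2) * σ * (P ij.1 ⊗ₖ Q ij.2)).trace.re : ℂ))⁻¹ •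
            ((P ij.1 ⊗ₖ Q ij.2) * σ * (P ij.1 ⊗ₖ Q ij.2))) - 1)
      ≤ gammaNorm σ - 1 := by
  classical
  set B : ι × κ → Matrix (m × n) (m × n) ℂ := fun ij => P ij.1 ⊗ₖ Q ij.2 with hB
  set blk : ι × κ → Matrix (m × n) (m × n) ℂ := fun ij => B ij * σ * B ij with hblk
  set pr : ι × κ → ℝ := fun ij => (blk ij).trace.re with hpr
  set S : Finset (ι × κ) := Finset.univ.filter (fun ij => 0 < pr ij) with hSdef
  -- basic facts about the blocks
  have hBH : ∀ ij, (B ij)ᴴ = B ij := fun ij => by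
    rw [hB, kron_conjTranspose, hPherm, hQherm]
  have hBB : ∀ ij, B ij * B ij = B ij := fun ij => by
    rw [show B ij = P ij.1 ⊗ₖ Q ij.2 from rfl, ← Matrix.mul_kronecker_mul, hPidem, hQidem]
  have hpsd : ∀ ij, (blk ij).PosSemidef := fun ij => by
    rw [hblk]
    have := hσ.1.conjTranspose_mul_mul_same (B ij)
    rwa [hBH] at this
  have hp_nonneg : ∀ ij, 0 ≤ pr ij := fun ij => trace_re_nonneg (hpsd ij)
  -- ∑ pr = 1
  have hBsum : ∑ ij : ι × κ, B ij = 1 := by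
    rw [hB, Fintype.sum_prod_type]
    calc ∑ i, ∑ j, (P i ⊗ₖ Q j) = ∑ i, (P i ⊗ₖ (∑ j, Q j)) :=
          Finset.sum_congr rfl fun i _ => (kron_sum_right _ _).symm
      _ = (∑ i, P i) ⊗ₖ (∑ j, Q j) := (kron_sum_left _ _).symm
      _ = 1 := by rw [hPsum, hQsum, Matrix.one_kronecker_one]
  have htr_blk : ∀ ij, (blk ij).trace = (B ij * σ).trace := fun ij => by
    rw [hblk, Matrix.trace_mul_comm (B ij * σ) (B ij), ← Matrix.mul_assoc, hBB]
  have hsum_pr : ∑ ij : ι × κ, pr ij = 1 := by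
    rw [hpr]
    have : ∑ ij : ι × κ, (blk ij).trace = 1 := by
      calc ∑ ij : ι × κ, (blk ij).trace = ∑ ij : ι × κ, (B ij * σ).trace :=
            Finset.sum_congr rfl fun ij _ => htr_blk ij
        _ = ((∑ ij : ι × κ, B ij) * σ).trace := by rw [Finset.sum_mul, Matrix.trace_sum]
        _ = 1 := by rw [hBsum, Matrix.one_mul, hσ.2]
      -- done
    calc ∑ ij : ι × κ, ((blk ij).trace).re = (∑ ij : ι × κ, (blk ij).trace).re :=
          (Complex.re_sum _ _).symm
      _ = 1 := by rw [this]; simp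
  have hS_pr : ∑ ij ∈ S, pr ij = 1 := by
    rw [hSdef]
    rw [Finset.sum_filter_of_ne fun ij _ hne =>
      lt_of_le_of_ne (hp_nonneg ij) (Ne.symm hne)]
    exact hsum_pr
  -- main inequality: ∑_{ij ∈ S} gammaNorm (blk ij) ≤ gammaNorm σ
  have hmain : ∑ ij ∈ S, gammaNorm (blk ij) ≤ gammaNorm σ := by
    refine le_gammaNorm σ fun c hc => ?_
    obtain ⟨r, u, v, hdec, rfl⟩ := hc
    have hblk_dec : ∀ ij : ι × κ, blk ij =
        ∑ k, (P ij.1 * u k * P ij.1) ⊗ₖ (Q ij.2 * v k * Q ij.2) := by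
      intro ij
      show B ij * σ * B ij = _
      rw [hdec, Finset.mul_sum, Finset.sum_mul]
      refine Finset.sum_congr rfl fun k _ => ?_
      rw [show B ij = P ij.1 ⊗ₖ Q ij.2 from rfl, ← Matrix.mul_kronecker_mul,
        ← Matrix.mul_kronecker_mul]
    have hle : ∀ ij : ι × κ, gammaNorm (blk ij) ≤
        ∑ k, traceNorm (P ij.1 * u k * P ij.1) * traceNorm (Q ij.2 * v k * Q ij.2) :=
      fun ij => gammaNorm_le _ ⟨r, _, _, hblk_dec ij, rfl⟩
    calc ∑ ij ∈ S, gammaNorm (blk ij)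
        ≤ ∑ ij ∈ S, ∑ k, traceNorm (P ij.1 * u k * P ij.1) *
            traceNorm (Q ij.2 * v k * Q ij.2) := Finset.sum_le_sum fun ij _ => hle ij
      _ ≤ ∑ ij : ι × κ, ∑ k, traceNorm (P ij.1 * u k * P ij.1) *
            traceNorm (Q ij.2 * v k * Q ij.2) := by
          refine Finset.sum_le_sum_of_subset_of_nonneg (Finset.filter_subset _ _)
            fun ij _ _ => Finset.sum_nonneg fun k _ =>
              mul_nonneg (traceNorm_nonneg _) (traceNorm_nonneg _)
      _ = ∑ k, (∑ i, traceNorm (P i * u k * P i)) * (∑ j, traceNorm (Q j * v k * Q j)) := by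
          rw [Finset.sum_comm]
          refine Finset.sum_congr rfl fun k _ => ?_
          rw [Finset.sum_mul_sum, Fintype.sum_prod_type]
      _ ≤ ∑ k, traceNorm (u k) * traceNorm (v k) := by
          refine Finset.sum_le_sum fun k _ => ?_
          refine mul_le_mul (pinching P hPherm hPidem hPorth hPsum (u k))
            (pinching Q hQherm hQidem hQorth hQsum (v k))
            (Finset.sum_nonneg fun j _ => traceNorm_nonneg _) (traceNorm_nonneg _)
  -- per-term bound: pr ij * gammaNorm (normalized) ≤ gammaNorm (blk ij)
  have hper : ∀ ij ∈ S, pr ij * gammaNorm (((pr ij : ℂ))⁻¹ • blk ij) ≤ gammaNorm (blk ij) := by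
    intro ij hij
    rw [hSdef, Finset.mem_filter] at hij
    have hpos : 0 < pr ij := hij.2
    have h1 : (((pr ij : ℂ))⁻¹ : ℂ) = (((pr ij)⁻¹ : ℝ) : ℂ) := (Complex.ofReal_inv _).symm
    have h2 : gammaNorm (((pr ij : ℂ))⁻¹ • blk ij) ≤ (pr ij)⁻¹ * gammaNorm (blk ij) := by
      rw [h1]
      exact gammaNorm_smul_le (blk ij) (inv_nonneg.mpr (le_of_lt hpos))
    calc pr ij * gammaNorm (((pr ij : ℂ))⁻¹ • blk ij)
        ≤ pr ij * ((pr ij)⁻¹ * gammaNorm (blk ij)) :=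
          mul_le_mul_of_nonneg_left h2 (le_of_lt hpos)
      _ = gammaNorm (blk ij) := by
          field_simp
  suffices h : ∑ ij ∈ S, pr ij * (gammaNorm (((pr ij : ℂ))⁻¹ • blk ij) - 1)
      ≤ gammaNorm σ - 1 by exact h
  calc ∑ ij ∈ S, pr ij * (gammaNorm (((pr ij : ℂ))⁻¹ • blk ij) - 1)
      = ∑ ij ∈ S, (pr ij * gammaNorm (((pr ij : ℂ))⁻¹ • blk ij) - pr ij) :=
        Finset.sum_congr rfl fun ij _ => by ring
    _ = ∑ ij ∈ S, pr ij * gammaNorm (((pr ij : ℂ))⁻¹ • blk ij) - ∑ ij ∈ S, pr ij :=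
        by rw [Finset.sum_sub_distrib]
    _ = ∑ ij ∈ S, pr ij * gammaNorm (((pr ij : ℂ))⁻¹ • blk ij) - 1 := by rw [hS_pr]
    _ ≤ ∑ ij ∈ S, gammaNorm (blk ij) - 1 :=
        sub_le_sub_right (Finset.sum_le_sum hper) 1
    _ ≤ gammaNorm σ - 1 := sub_le_sub_right hmain 1
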